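/- Let r ≥ 2 and s ≥ 1. The set Σ := {ν_1−ν_2, …, ν_{s−1}−ν_s, ν_s−ε_1, ε_1−ε_2, …, ε_{r−1}−ε_r, ε_r} is a base of Δ := Δ_reg ∪ Δ_sing, where Δ_reg := {±ε_i±ε_j : 1 ≤ i < j ≤ r} ∪ {±ν_i±ν_j : 1 ≤ i < j ≤ s} ∪ {±ν_j, ±2ν_j : 1 ≤ j ≤ s} and Δ_sing := {±ε_i : 1 ≤ i ≤ r} ∪ {±ε_i±ν_j : 1 ≤ i ≤ r, 1 ≤ j ≤ s}. Moreover Π := {ε_1−ε_2, …, ε_{r−1}−ε_r, ε_{r−1}+ε_r, ν_1−ν_2, …, ν_{s−1}−ν_s, ν_s} is a base of Δ_reg with Δ_reg ∩ ℕΠ = Δ_reg ∩ ℕΣ. (Δ is the restricted root system of the pair (osp(2r|2n), osp(r|2s)×osp(r|2n−2s)) with even part D_r ⊔ BC_s, and Π is the set of principal roots determined by Σ.) -/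

import Mathlib

open Pointwise

/-- `NComb S` is the set of all finite linear combinations of elements of `S`
with non-negative integer coefficients, i.e. the additive submonoid generated by `S`. -/
def NComb {V : Type*} [AddCommMonoid V] (S : Set V) : Set V :=
  (AddSubmonoid.closure S : Set V)

/-- `B` is a base of `Δ`: `B ⊆ Δ`, `B` is linearly independent over `ℝ`, and
`Δ ⊆ ℕB ∪ (−ℕB)`. -/
def IsBase {V : Type*} [AddCommGroup V] [Module ℝ V] (Δ B : Set V) : Prop :=
  B ⊆ Δ ∧ LinearIndependent ℝ (fun x : B => (x : V)) ∧
    Δ ⊆ NComb B ∪ (-NComb B)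

/-- The `i`-th standard basis vector of `ℝⁿ` (indices are 0-based; junk value `0` out of range). -/
def bv (n i : ℕ) : Fin n → ℝ :=
  if h : i < n then Pi.single (⟨i, h⟩ : Fin n) 1 else 0

/-- The set `{1, -1}` of signs. -/
def pm : Set ℝ := {1, -1}
/-- The even part `Δ_reg = {±ε_i±ε_j : i<j} ∪ {±ν_i±ν_j : i<j} ∪ {±ν_j, ±2ν_j}` of the
restricted root system of `(osp(2r|2n), osp(r|2s) × osp(r|2n−2s))`, with `ε_i = bv (r+s) i`
for `0 ≤ i < r` (0-based) and `ν_j = bv (r+s) (r+j)` for `0 ≤ j < s`. -/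
def Dreg (r s : ℕ) : Set (Fin (r + s) → ℝ) :=
  {x | ∃ a ∈ pm, ∃ b ∈ pm, ∃ i j : ℕ, i < j ∧ j < r ∧
      x = a • bv (r + s) i + b • bv (r + s) j} ∪
  {x | ∃ a ∈ pm, ∃ b ∈ pm, ∃ i j : ℕ, i < j ∧ j < s ∧
      x = a • bv (r + s) (r + i) + b • bv (r + s) (r + j)} ∪
  {x | ∃ a ∈ pm, ∃ j : ℕ, j < s ∧
      (x = a • bv (r + s) (r + j) ∨ x = (2 * a) • bv (r + s) (r + j))}

/-- The singular part `Δ_sing = {±ε_i} ∪ {±ε_i±ν_j}`. -/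
def Dsing (r s : ℕ) : Set (Fin (r + s) → ℝ) :=
  {x | ∃ a ∈ pm, ∃ i : ℕ, i < r ∧ x = a • bv (r + s) i} ∪
  {x | ∃ a ∈ pm, ∃ b ∈ pm, ∃ i j : ℕ, i < r ∧ j < s ∧
      x = a • bv (r + s) i + b • bv (r + s) (r + j)}

/-- The base `Σ = {ν_1−ν_2, …, ν_{s−1}−ν_s, ν_s−ε_1, ε_1−ε_2, …, ε_{r−1}−ε_r, ε_r}`
(0-based indices). -/
def S17 (r s : ℕ) : Set (Fin (r + s) → ℝ) :=
  {x | ∃ j : ℕ, j + 1 < s ∧ x = bv (r + s) (r + j) - bv (r + s) (r + j + 1)} ∪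
  {bv (r + s) (r + s - 1) - bv (r + s) 0} ∪
  {x | ∃ i : ℕ, i + 1 < r ∧ x = bv (r + s) i - bv (r + s) (i + 1)} ∪
  {bv (r + s) (r - 1)}

/-- The principal roots
`Π = {ε_1−ε_2, …, ε_{r−1}−ε_r, ε_{r−1}+ε_r, ν_1−ν_2, …, ν_{s−1}−ν_s, ν_s}`
(0-based indices). -/
def P17 (r s : ℕ) : Set (Fin (r + s) → ℝ) :=
  {x | ∃ i : ℕ, i + 1 < r ∧ x = bv (r + s) i - bv (r + s) (i + 1)} ∪
  {bv (r + s) (r - 2) + bv (r + s) (r - 1)} ∪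
  {x | ∃ j : ℕ, j + 1 < s ∧ x = bv (r + s) (r + j) - bv (r + s) (r + j + 1)} ∪
  {bv (r + s) (r + s - 1)}

namespace St17aux

lemma pm_one : (1:ℝ) ∈ pm := Or.inl rfl
lemma pm_neg_one : (-1:ℝ) ∈ pm := Or.inr rfl
lemma pm_cases {a : ℝ} (h : a ∈ pm) : a = 1 ∨ a = -1 := h

lemma bv_eq_single {n i : ℕ} (h : i < n) : bv n i = Pi.single (⟨i, h⟩ : Fin n) 1 := by
  simp [bv, h]

lemma bv_congr {n : ℕ} {i j : ℕ} (h : i = j) : bv n i = bv n j := by rw [h]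

/-- downward induction -/
lemma down_induction {P : ℕ → Prop} {n : ℕ} (h0 : P (n-1))
    (hstep : ∀ k, k + 1 < n → P (k+1) → P k) : ∀ k, k < n → P k := by
  have H : ∀ d k, k + d + 1 = n → P k := by
    intro d
    induction d with
    | zero =>
      intro k hk
      have hk' : k = n - 1 := by omega
      rwa [hk']
    | succ d ih =>
      intro k hk
      exact hstep k (by omega) (ih (k+1) (by omega))
  intro k hk; exact H (n - 1 - k) k (by omega)

/-! ### chain vectors for S17 -/

noncomputable def uu (r s k : ℕ) : Fin (r+s) → ℝ := bv (r+s) (if k < s then r + k else k - s)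

lemma uu_nu {r s j : ℕ} (hj : j < s) : uu r s j = bv (r+s) (r+j) := by simp [uu, hj]

lemma uu_eps' {r s k : ℕ} (hk : s ≤ k) : uu r s k = bv (r+s) (k - s) := by
  simp [uu, Nat.not_lt.mpr hk]

lemma uu_eps {r s i : ℕ} : uu r s (s+i) = bv (r+s) i := by
  rw [uu_eps' (Nat.le_add_right s i), Nat.add_sub_cancel_left]

noncomputable def fS (r s k : ℕ) : Fin (r+s) → ℝ :=
  if k + 1 < r + s then uu r s k - uu r s (k+1) else uu r s k

lemma fS_step {r s k : ℕ} (h : k + 1 < r + s) : fS r s k = uu r s k - uu r s (k+1) :=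
  if_pos h

lemma fS_nu {r s j : ℕ} (hr : 1 ≤ r) (hj : j + 1 < s) :
    fS r s j = bv (r+s) (r+j) - bv (r+s) (r+j+1) := by
  rw [fS_step (by omega), uu_nu (by omega), uu_nu (by omega),
    bv_congr (show r+(j+1) = r+j+1 by omega)]

lemma fS_mid {r s : ℕ} (hr : 1 ≤ r) (hs : 1 ≤ s) :
    fS r s (s-1) = bv (r+s) (r+s-1) - bv (r+s) 0 := by
  rw [fS_step (by omega), uu_nu (by omega),
    show s-1+1 = s+0 by omega, uu_eps,
    bv_congr (show r+(s-1) = r+s-1 by omega)]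

lemma fS_eps {r s i : ℕ} (hi : i + 1 < r) :
    fS r s (s+i) = bv (r+s) i - bv (r+s) (i+1) := by
  rw [fS_step (by omega), uu_eps, show s+i+1 = s+(i+1) by omega, uu_eps]

lemma fS_last {r s : ℕ} (hr : 1 ≤ r) (hs : 1 ≤ s) :
    fS r s (r+s-1) = bv (r+s) (r-1) := by
  rw [fS, if_neg (by omega), show r+s-1 = s+(r-1) by omega, uu_eps]

lemma S17_eq {r s : ℕ} (hr : 2 ≤ r) (hs : 1 ≤ s) :
    S17 r s = Set.range (fun k : Fin (r+s) => fS r s k) := by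
  ext x
  constructor
  · rintro (((⟨j, hj, rfl⟩ | rfl) | ⟨i, hi, rfl⟩) | rfl)
    · exact ⟨⟨j, by omega⟩, (fS_nu (by omega) hj)⟩
    · exact ⟨⟨s-1, by omega⟩, fS_mid (by omega) hs⟩
    · exact ⟨⟨s+i, by omega⟩, fS_eps hi⟩
    · exact ⟨⟨r+s-1, by omega⟩, fS_last (by omega) hs⟩
  · rintro ⟨⟨k, hk⟩, rfl⟩
    simp only
    by_cases h1 : k + 1 < s
    · exact Or.inl (Or.inl (Or.inl ⟨k, h1, fS_nu (by omega) h1⟩))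
    by_cases h2 : k + 1 = s
    · refine Or.inl (Or.inl (Or.inr ?_))
      rw [show k = s - 1 by omega]
      exact fS_mid (by omega) hs
    by_cases h3 : k + 1 < r + s
    · refine Or.inl (Or.inr ⟨k - s, by omega, ?_⟩)
      rw [fS_step h3, uu_eps' (by omega), uu_eps' (by omega),
        bv_congr (show k+1-s = k-s+1 by omega)]
    · refine Or.inr ?_
      rw [show k = r + s - 1 by omega]
      exact fS_last (by omega) hs

/-! ### chain vectors for P17 -/

noncomputable def fP (r s k : ℕ) : Fin (r+s) → ℝ :=
  if k = r - 1 then bv (r+s) (r-2) + bv (r+s) (r-1)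
  else if k + 1 < r + s then bv (r+s) k - bv (r+s) (k+1) else bv (r+s) (r+s-1)

lemma fP_diff {r s k : ℕ} (h1 : k ≠ r - 1) (h2 : k + 1 < r + s) :
    fP r s k = bv (r+s) k - bv (r+s) (k+1) := by
  rw [fP, if_neg h1, if_pos h2]

lemma fP_sum {r s : ℕ} : fP r s (r-1) = bv (r+s) (r-2) + bv (r+s) (r-1) := by
  rw [fP, if_pos rfl]

lemma fP_nu {r s j : ℕ} (hr : 1 ≤ r) (hj : j + 1 < s) :
    fP r s (r+j) = bv (r+s) (r+j) - bv (r+s) (r+j+1) := by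
  rw [fP_diff (by omega) (by omega)]

lemma fP_last {r s : ℕ} (hr : 1 ≤ r) (hs : 1 ≤ s) :
    fP r s (r+s-1) = bv (r+s) (r+s-1) := by
  rw [fP, if_neg (by omega), if_neg (by omega)]

lemma P17_eq {r s : ℕ} (hr : 2 ≤ r) (hs : 1 ≤ s) :
    P17 r s = Set.range (fun k : Fin (r+s) => fP r s k) := by
  ext x
  constructor
  · rintro (((⟨i, hi, rfl⟩ | rfl) | ⟨j, hj, rfl⟩) | rfl)
    · exact ⟨⟨i, by omega⟩, fP_diff (k := i) (by omega) (by omega)⟩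
    · exact ⟨⟨r-1, by omega⟩, fP_sum⟩
    · exact ⟨⟨r+j, by omega⟩, fP_nu (by omega) hj⟩
    · exact ⟨⟨r+s-1, by omega⟩, fP_last (by omega) hs⟩
  · rintro ⟨⟨k, hk⟩, rfl⟩
    simp only
    by_cases h1 : k + 1 < r
    · exact Or.inl (Or.inl (Or.inl ⟨k, h1, fP_diff (by omega) (by omega)⟩))
    by_cases h2 : k = r - 1
    · refine Or.inl (Or.inl (Or.inr ?_))
      rw [h2]; exact fP_sum
    by_cases h3 : k + 1 < r + s
    · refine Or.inl (Or.inr ⟨k - r, by omega, ?_⟩)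
      rw [bv_congr (show r+(k-r) = k by omega), bv_congr (show r+(k-r)+1 = k+1 by omega),
        fP_diff (by omega) h3]
    · refine Or.inr ?_
      rw [show k = r + s - 1 by omega]
      exact fP_last (by omega) hs


/-! ### linear independence -/

lemma single_mem_span_of_bv {r s : ℕ} {W : Submodule ℝ (Fin (r+s) → ℝ)}
    (h : ∀ i : ℕ, i < r + s → bv (r+s) i ∈ W) (m : Fin (r+s)) :
    Pi.single m (1:ℝ) ∈ W := by
  have h2 := h (m : ℕ) m.isLt
  rwa [bv_eq_single m.isLt, Fin.eta] at h2

lemma top_le_span {r s : ℕ} {f : Fin (r+s) → (Fin (r+s) → ℝ)}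
    (h : ∀ i : ℕ, i < r + s → bv (r+s) i ∈ Submodule.span ℝ (Set.range f)) :
    ⊤ ≤ Submodule.span ℝ (Set.range f) := by
  intro x _
  rw [← Finset.univ_sum_single x]
  refine Submodule.sum_mem _ fun m _ => ?_
  have : Pi.single m (x m) = x m • (Pi.single m (1:ℝ) : Fin (r+s) → ℝ) := by
    ext j; rcases eq_or_ne j m with rfl | hj
    · simp
    · simp [Pi.single_eq_of_ne hj]
  rw [this]
  exact Submodule.smul_mem _ _ (single_mem_span_of_bv h m)

lemma linIndep_of_bv_mem_span {r s : ℕ} {f : Fin (r+s) → (Fin (r+s) → ℝ)}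
    (h : ∀ i : ℕ, i < r + s → bv (r+s) i ∈ Submodule.span ℝ (Set.range f)) :
    LinearIndependent ℝ f := by
  refine linearIndependent_of_top_le_span_of_card_eq_finrank (top_le_span h) ?_
  simp [Module.finrank_pi]

lemma bv_mem_span_S {r s : ℕ} (hr : 2 ≤ r) (hs : 1 ≤ s) :
    ∀ i : ℕ, i < r + s →
      bv (r+s) i ∈ Submodule.span ℝ (Set.range (fun k : Fin (r+s) => fS r s k)) := by
  set W := Submodule.span ℝ (Set.range (fun k : Fin (r+s) => fS r s k)) with hW
  have hf : ∀ k, k < r + s → fS r s k ∈ W :=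
    fun k hk => Submodule.subset_span ⟨⟨k, hk⟩, rfl⟩
  have hu : ∀ k, k < r + s → uu r s k ∈ W := by
    refine down_induction ?_ ?_
    · have h1 := hf (r+s-1) (by omega)
      rwa [fS, if_neg (by omega)] at h1
    · intro k hk1 hk2
      have h1 : uu r s k = fS r s k + uu r s (k+1) := by
        rw [fS_step hk1]; module
      rw [h1]
      exact add_mem (hf k (by omega)) hk2
  intro i hi
  by_cases h : i < r
  · have := hu (s+i) (by omega)
    rwa [uu_eps] at this
  · have := hu (i - r) (by omega)
    rwa [uu_nu (by omega), bv_congr (show r + (i-r) = i by omega)] at this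

lemma bv_mem_span_P {r s : ℕ} (hr : 2 ≤ r) (hs : 1 ≤ s) :
    ∀ i : ℕ, i < r + s →
      bv (r+s) i ∈ Submodule.span ℝ (Set.range (fun k : Fin (r+s) => fP r s k)) := by
  set W := Submodule.span ℝ (Set.range (fun k : Fin (r+s) => fP r s k)) with hW
  have hf : ∀ k, k < r + s → fP r s k ∈ W :=
    fun k hk => Submodule.subset_span ⟨⟨k, hk⟩, rfl⟩
  have hsum : bv (r+s) (r-2) + bv (r+s) (r-1) ∈ W := by
    have := hf (r-1) (by omega); rwa [fP_sum] at this
  have hdiff : bv (r+s) (r-2) - bv (r+s) (r-1) ∈ W := by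
    have := hf (r-2) (by omega)
    rwa [fP_diff (by omega) (by omega), bv_congr (show r-2+1 = r-1 by omega)] at this
  have h2 : bv (r+s) (r-2) ∈ W := by
    have e : bv (r+s) (r-2) =
        (1/2 : ℝ) • ((bv (r+s) (r-2) + bv (r+s) (r-1)) + (bv (r+s) (r-2) - bv (r+s) (r-1))) := by
      module
    rw [e]
    exact Submodule.smul_mem _ _ (add_mem hsum hdiff)
  have h1 : bv (r+s) (r-1) ∈ W := by
    have e : bv (r+s) (r-1) = (bv (r+s) (r-2) + bv (r+s) (r-1)) - bv (r+s) (r-2) := by module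
    rw [e]
    exact sub_mem hsum h2
  refine down_induction ?_ ?_
  · have := hf (r+s-1) (by omega); rwa [fP_last (by omega) hs] at this
  · intro k hk1 hk2
    by_cases hk3 : k = r - 1
    · rwa [hk3]
    by_cases hk4 : k = r - 2
    · rwa [hk4]
    have e : bv (r+s) k = fP r s k + bv (r+s) (k+1) := by
      rw [fP_diff hk3 hk1]; module
    rw [e]
    exact add_mem (hf k (by omega)) hk2

lemma linIndep_S17 {r s : ℕ} (hr : 2 ≤ r) (hs : 1 ≤ s) :
    LinearIndependent ℝ (fun x : S17 r s => (x : Fin (r+s) → ℝ)) := by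
  rw [show (S17 r s) = Set.range (fun k : Fin (r+s) => fS r s k) from S17_eq hr hs]
  exact (linearIndepOn_id_range_iff (linIndep_of_bv_mem_span (bv_mem_span_S hr hs)).injective).mpr
    (linIndep_of_bv_mem_span (bv_mem_span_S hr hs))

lemma linIndep_P17 {r s : ℕ} (hr : 2 ≤ r) (hs : 1 ≤ s) :
    LinearIndependent ℝ (fun x : P17 r s => (x : Fin (r+s) → ℝ)) := by
  rw [show (P17 r s) = Set.range (fun k : Fin (r+s) => fP r s k) from P17_eq hr hs]
  exact (linearIndepOn_id_range_iff (linIndep_of_bv_mem_span (bv_mem_span_P hr hs)).injective).mpr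
    (linIndep_of_bv_mem_span (bv_mem_span_P hr hs))


/-! ### membership in NComb: S side -/

variable {r s : ℕ}

lemma fS_mem (hr : 2 ≤ r) (hs : 1 ≤ s) {k : ℕ} (hk : k < r+s) :
    fS r s k ∈ AddSubmonoid.closure (S17 r s) := by
  apply AddSubmonoid.subset_closure
  rw [S17_eq hr hs]; exact ⟨⟨k, hk⟩, rfl⟩

lemma uu_mem (hr : 2 ≤ r) (hs : 1 ≤ s) :
    ∀ k, k < r+s → uu r s k ∈ AddSubmonoid.closure (S17 r s) := by
  refine down_induction ?_ ?_
  · have h1 := fS_mem hr hs (k := r+s-1) (by omega)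
    rwa [fS, if_neg (by omega)] at h1
  · intro k hk1 hk2
    have e : uu r s k = fS r s k + uu r s (k+1) := by rw [fS_step hk1]; module
    rw [e]; exact add_mem (fS_mem hr hs (by omega)) hk2

lemma uu_diff_mem (hr : 2 ≤ r) (hs : 1 ≤ s) :
    ∀ k l, k ≤ l → l < r+s → uu r s k - uu r s l ∈ AddSubmonoid.closure (S17 r s) := by
  intro k l hkl
  induction l, hkl using Nat.le_induction with
  | base => intro _; rw [sub_self]; exact zero_mem _
  | succ l hkl ih =>
    intro hl
    have e : uu r s k - uu r s (l+1) = (uu r s k - uu r s l) + fS r s l := by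
      rw [fS_step hl]; module
    rw [e]; exact add_mem (ih (by omega)) (fS_mem hr hs (by omega))

lemma S_eps_mem (hr : 2 ≤ r) (hs : 1 ≤ s) {i : ℕ} (hi : i < r) :
    bv (r+s) i ∈ AddSubmonoid.closure (S17 r s) := by
  have := uu_mem hr hs (s+i) (by omega); rwa [uu_eps] at this

lemma S_nu_mem (hr : 2 ≤ r) (hs : 1 ≤ s) {j : ℕ} (hj : j < s) :
    bv (r+s) (r+j) ∈ AddSubmonoid.closure (S17 r s) := by
  have := uu_mem hr hs j (by omega); rwa [uu_nu hj] at this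

lemma S_eps_diff (hr : 2 ≤ r) (hs : 1 ≤ s) {i j : ℕ} (hij : i ≤ j) (hj : j < r) :
    bv (r+s) i - bv (r+s) j ∈ AddSubmonoid.closure (S17 r s) := by
  have := uu_diff_mem hr hs (s+i) (s+j) (by omega) (by omega)
  rwa [uu_eps, uu_eps] at this

lemma S_nu_diff (hr : 2 ≤ r) (hs : 1 ≤ s) {i j : ℕ} (hij : i ≤ j) (hj : j < s) :
    bv (r+s) (r+i) - bv (r+s) (r+j) ∈ AddSubmonoid.closure (S17 r s) := by
  have := uu_diff_mem hr hs i j hij (by omega)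
  rwa [uu_nu (by omega), uu_nu hj] at this

lemma S_mixed_diff (hr : 2 ≤ r) (hs : 1 ≤ s) {i j : ℕ} (hi : i < r) (hj : j < s) :
    bv (r+s) (r+j) - bv (r+s) i ∈ AddSubmonoid.closure (S17 r s) := by
  have := uu_diff_mem hr hs j (s+i) (by omega) (by omega)
  rwa [uu_nu hj, uu_eps] at this

/-! ### membership in NComb: P side -/

lemma fP_mem (hr : 2 ≤ r) (hs : 1 ≤ s) {k : ℕ} (hk : k < r+s) :
    fP r s k ∈ AddSubmonoid.closure (P17 r s) := by
  apply AddSubmonoid.subset_closure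
  rw [P17_eq hr hs]; exact ⟨⟨k, hk⟩, rfl⟩

lemma P_nu_mem' (hr : 2 ≤ r) (hs : 1 ≤ s) :
    ∀ k, k < r+s → r ≤ k → bv (r+s) k ∈ AddSubmonoid.closure (P17 r s) := by
  refine down_induction ?_ ?_
  · intro _
    have := fP_mem hr hs (k := r+s-1) (by omega)
    rwa [fP_last (by omega) hs] at this
  · intro k hk1 ih hk2
    have e : bv (r+s) k = fP r s k + bv (r+s) (k+1) := by
      rw [fP_diff (by omega) hk1]; module
    rw [e]; exact add_mem (fP_mem hr hs (by omega)) (ih (by omega))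

lemma P_nu_mem (hr : 2 ≤ r) (hs : 1 ≤ s) {j : ℕ} (hj : j < s) :
    bv (r+s) (r+j) ∈ AddSubmonoid.closure (P17 r s) :=
  P_nu_mem' hr hs (r+j) (by omega) (by omega)

lemma P_diff_mem (hr : 2 ≤ r) (hs : 1 ≤ s) :
    ∀ k l, k ≤ l → l < r+s → (l < r ∨ r ≤ k) →
      bv (r+s) k - bv (r+s) l ∈ AddSubmonoid.closure (P17 r s) := by
  intro k l hkl
  induction l, hkl using Nat.le_induction with
  | base => intro _ _; rw [sub_self]; exact zero_mem _
  | succ l hkl ih =>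
    intro hl hcond
    have e : bv (r+s) k - bv (r+s) (l+1) = (bv (r+s) k - bv (r+s) l) + fP r s l := by
      rw [fP_diff (by omega) hl]; module
    rw [e]; exact add_mem (ih (by omega) (by omega)) (fP_mem hr hs (by omega))

lemma P_sum1 (hr : 2 ≤ r) (hs : 1 ≤ s) {i : ℕ} (hi : i + 1 < r) :
    bv (r+s) i + bv (r+s) (r-1) ∈ AddSubmonoid.closure (P17 r s) := by
  have h1 := fP_mem hr hs (k := r-1) (by omega)
  rw [fP_sum] at h1
  have h2 := P_diff_mem hr hs i (r-2) (by omega) (by omega) (by omega)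
  have e : bv (r+s) i + bv (r+s) (r-1) =
      (bv (r+s) i - bv (r+s) (r-2)) + (bv (r+s) (r-2) + bv (r+s) (r-1)) := by module
  rw [e]; exact add_mem h2 h1

lemma P_sum (hr : 2 ≤ r) (hs : 1 ≤ s) {i j : ℕ} (hij : i < j) (hj : j < r) :
    bv (r+s) i + bv (r+s) j ∈ AddSubmonoid.closure (P17 r s) := by
  by_cases h : j = r - 1
  · rw [h]; exact P_sum1 hr hs (by omega)
  · have e : bv (r+s) i + bv (r+s) j =
        (bv (r+s) j - bv (r+s) (r-1)) + (bv (r+s) i + bv (r+s) (r-1)) := by module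
    rw [e]
    exact add_mem (P_diff_mem hr hs j (r-1) (by omega) (by omega) (by omega))
      (P_sum1 hr hs (by omega))

lemma P_nu_sum (hr : 2 ≤ r) (hs : 1 ≤ s) {i j : ℕ} (hij : i < j) (hj : j < s) :
    bv (r+s) (r+i) + bv (r+s) (r+j) ∈ AddSubmonoid.closure (P17 r s) := by
  have e : bv (r+s) (r+i) + bv (r+s) (r+j) =
      ((bv (r+s) (r+i) - bv (r+s) (r+j)) + bv (r+s) (r+j)) + bv (r+s) (r+j) := by module
  rw [e]
  exact add_mem (add_mem (P_diff_mem hr hs (r+i) (r+j) (by omega) (by omega) (by omega))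
    (P_nu_mem hr hs hj)) (P_nu_mem hr hs hj)

/-! ### the functional FF -/

noncomputable def cw (r s m : ℕ) : ℝ := if m < r then (r:ℝ) - m else 2*r + s - m

lemma cw_lo {m : ℕ} (h : m < r) : cw r s m = (r:ℝ) - m := if_pos h

lemma cw_hi {m : ℕ} (h : r ≤ m) : cw r s m = 2*(r:ℝ) + s - m := if_neg (Nat.not_lt.mpr h)

noncomputable def FF (r s : ℕ) (x : Fin (r+s) → ℝ) : ℝ := ∑ m : Fin (r+s), cw r s (m:ℕ) * x m

lemma FF_add (x y : Fin (r+s) → ℝ) : FF r s (x+y) = FF r s x + FF r s y := by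
  simp [FF, mul_add, Finset.sum_add_distrib]

lemma FF_zero : FF r s 0 = 0 := by simp [FF]

lemma FF_neg (x : Fin (r+s) → ℝ) : FF r s (-x) = -FF r s x := by simp [FF]

lemma FF_sub (x y : Fin (r+s) → ℝ) : FF r s (x-y) = FF r s x - FF r s y := by
  simp [FF, mul_sub, Finset.sum_sub_distrib]

lemma FF_smul (a : ℝ) (x : Fin (r+s) → ℝ) : FF r s (a • x) = a * FF r s x := by
  simp [FF, Finset.mul_sum]; congr 1; ext m; ring

lemma FF_bv {i : ℕ} (h : i < r + s) : FF r s (bv (r+s) i) = cw r s i := by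
  rw [FF, bv_eq_single h]
  rw [Finset.sum_eq_single (⟨i, h⟩ : Fin (r+s))]
  · simp
  · intro b _ hb; simp [Pi.single_eq_of_ne hb]
  · simp

lemma FF_nonneg {S : Set (Fin (r+s) → ℝ)} (h : ∀ y ∈ S, 0 ≤ FF r s y) {x : Fin (r+s) → ℝ}
    (hx : x ∈ AddSubmonoid.closure S) : 0 ≤ FF r s x :=
  AddSubmonoid.closure_induction (fun y hy => h y hy) (by rw [FF_zero])
    (fun a b _ _ ha hb => by rw [FF_add]; exact add_nonneg ha hb) hx

lemma FF_S_pos (hr : 2 ≤ r) (hs : 1 ≤ s) : ∀ x ∈ S17 r s, 0 < FF r s x := by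
  rintro x (((⟨j, hj, rfl⟩ | rfl) | ⟨i, hi, rfl⟩) | rfl)
  · rw [FF_sub, FF_bv (by omega), FF_bv (by omega), cw_hi (by omega), cw_hi (by omega)]
    push_cast; linarith
  · rw [FF_sub, FF_bv (by omega), FF_bv (by omega), cw_hi (by omega), cw_lo (by omega)]
    have e : ((r+s-1:ℕ):ℝ) = (r:ℝ) + (s:ℝ) - 1 := by
      rw [Nat.cast_sub (by omega)]; push_cast; ring
    rw [e]; push_cast; linarith
  · rw [FF_sub, FF_bv (by omega), FF_bv (by omega), cw_lo (by omega), cw_lo (by omega)]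
    push_cast; linarith
  · rw [FF_bv (by omega), cw_lo (by omega)]
    have e : ((r-1:ℕ):ℝ) = (r:ℝ) - 1 := by rw [Nat.cast_sub (by omega)]; push_cast; ring
    rw [e]; linarith

lemma FF_P_pos (hr : 2 ≤ r) (hs : 1 ≤ s) : ∀ x ∈ P17 r s, 0 < FF r s x := by
  have e1 : ((r-1:ℕ):ℝ) = (r:ℝ) - 1 := by rw [Nat.cast_sub (by omega)]; push_cast; ring
  have e2 : ((r-2:ℕ):ℝ) = (r:ℝ) - 2 := by rw [Nat.cast_sub (by omega)]; push_cast; ring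
  have e3 : ((r+s-1:ℕ):ℝ) = (r:ℝ) + (s:ℝ) - 1 := by
    rw [Nat.cast_sub (by omega)]; push_cast; ring
  rintro x (((⟨i, hi, rfl⟩ | rfl) | ⟨j, hj, rfl⟩) | rfl)
  · rw [FF_sub, FF_bv (by omega), FF_bv (by omega), cw_lo (by omega), cw_lo (by omega)]
    push_cast; linarith
  · rw [FF_add, FF_bv (by omega), FF_bv (by omega), cw_lo (by omega), cw_lo (by omega), e1, e2]
    have : (2:ℝ) ≤ (r:ℝ) := by exact_mod_cast hr
    linarith
  · rw [FF_sub, FF_bv (by omega), FF_bv (by omega), cw_hi (by omega), cw_hi (by omega)]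
    push_cast; linarith
  · rw [FF_bv (by omega), cw_hi (by omega), e3]
    have : (1:ℝ) ≤ (s:ℝ) := by exact_mod_cast hs
    linarith

lemma FF_Dreg_ne (hr : 2 ≤ r) (hs : 1 ≤ s) : ∀ x ∈ Dreg r s, FF r s x ≠ 0 := by
  rintro x ((⟨a, ha, b, hb, i, j, hij, hj, rfl⟩ | ⟨a, ha, b, hb, i, j, hij, hj, rfl⟩) |
    ⟨a, ha, j, hj, hx⟩)
  · rw [FF_add, FF_smul, FF_smul, FF_bv (by omega), FF_bv (by omega),
      cw_lo (by omega), cw_lo (by omega)]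
    have hi' : (i:ℝ) < j := by exact_mod_cast hij
    have hj' : (j:ℝ) < r := by exact_mod_cast hj
    rcases pm_cases ha with rfl | rfl <;> rcases pm_cases hb with rfl | rfl <;>
      intro h <;> nlinarith
  · rw [FF_add, FF_smul, FF_smul, FF_bv (by omega), FF_bv (by omega),
      cw_hi (by omega), cw_hi (by omega)]
    have hi' : (i:ℝ) < j := by exact_mod_cast hij
    have hj' : (j:ℝ) < s := by exact_mod_cast hj
    rcases pm_cases ha with rfl | rfl <;> rcases pm_cases hb with rfl | rfl <;>
      intro h <;> push_cast at h <;> nlinarith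
  · have hj' : (j:ℝ) < s := by exact_mod_cast hj
    rcases pm_cases ha with rfl | rfl <;> rcases hx with rfl | rfl <;>
      rw [FF_smul, FF_bv (by omega), cw_hi (by omega)] <;>
      intro h <;> push_cast at h <;> nlinarith

/-! ### coverage -/

lemma mem_or_left {S : Set (Fin (r+s) → ℝ)} {x y : Fin (r+s) → ℝ}
    (h : y ∈ AddSubmonoid.closure S) (e : x = y) : x ∈ NComb S ∪ -NComb S :=
  Or.inl (by rw [e]; exact h)

lemma mem_or_right {S : Set (Fin (r+s) → ℝ)} {x y : Fin (r+s) → ℝ}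
    (h : y ∈ AddSubmonoid.closure S) (e : -x = y) : x ∈ NComb S ∪ -NComb S :=
  Or.inr (Set.mem_neg.mpr (by rw [e]; exact h))

lemma cover_S (hr : 2 ≤ r) (hs : 1 ≤ s) :
    Dreg r s ∪ Dsing r s ⊆ NComb (S17 r s) ∪ -NComb (S17 r s) := by
  rintro x (((⟨a, ha, b, hb, i, j, hij, hj, rfl⟩ | ⟨a, ha, b, hb, i, j, hij, hj, rfl⟩) |
    ⟨a, ha, j, hj, hx⟩) | (⟨a, ha, i, hi, rfl⟩ | ⟨a, ha, b, hb, i, j, hi, hj, rfl⟩))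
  · rcases pm_cases ha with rfl | rfl <;> rcases pm_cases hb with rfl | rfl
    · exact mem_or_left (add_mem (S_eps_mem (i := i) hr hs (by omega)) (S_eps_mem hr hs hj))
        (by module)
    · exact mem_or_left (S_eps_diff (i := i) hr hs (by omega) hj) (by module)
    · exact mem_or_right (S_eps_diff (i := i) hr hs (by omega) hj) (by module)
    · exact mem_or_right (add_mem (S_eps_mem (i := i) hr hs (by omega)) (S_eps_mem hr hs hj))
        (by module)
  · rcases pm_cases ha with rfl | rfl <;> rcases pm_cases hb with rfl | rfl
    · exact mem_or_left (add_mem (S_nu_mem (j := i) hr hs (by omega)) (S_nu_mem hr hs hj))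
        (by module)
    · exact mem_or_left (S_nu_diff (i := i) hr hs (by omega) hj) (by module)
    · exact mem_or_right (S_nu_diff (i := i) hr hs (by omega) hj) (by module)
    · exact mem_or_right (add_mem (S_nu_mem (j := i) hr hs (by omega)) (S_nu_mem hr hs hj))
        (by module)
  · rcases pm_cases ha with rfl | rfl <;> rcases hx with rfl | rfl
    · exact mem_or_left (S_nu_mem hr hs hj) (by module)
    · exact mem_or_left (add_mem (S_nu_mem hr hs hj) (S_nu_mem hr hs hj)) (by module)
    · exact mem_or_right (S_nu_mem hr hs hj) (by module)
    · exact mem_or_right (add_mem (S_nu_mem hr hs hj) (S_nu_mem hr hs hj)) (by module)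
  · rcases pm_cases ha with rfl | rfl
    · exact mem_or_left (S_eps_mem hr hs hi) (by module)
    · exact mem_or_right (S_eps_mem hr hs hi) (by module)
  · rcases pm_cases ha with rfl | rfl <;> rcases pm_cases hb with rfl | rfl
    · exact mem_or_left (add_mem (S_eps_mem hr hs hi) (S_nu_mem hr hs hj)) (by module)
    · exact mem_or_right (S_mixed_diff hr hs hi hj) (by module)
    · exact mem_or_left (S_mixed_diff hr hs hi hj) (by module)
    · exact mem_or_right (add_mem (S_eps_mem hr hs hi) (S_nu_mem hr hs hj)) (by module)

lemma cover_P (hr : 2 ≤ r) (hs : 1 ≤ s) :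
    Dreg r s ⊆ NComb (P17 r s) ∪ -NComb (P17 r s) := by
  rintro x ((⟨a, ha, b, hb, i, j, hij, hj, rfl⟩ | ⟨a, ha, b, hb, i, j, hij, hj, rfl⟩) |
    ⟨a, ha, j, hj, hx⟩)
  · rcases pm_cases ha with rfl | rfl <;> rcases pm_cases hb with rfl | rfl
    · exact mem_or_left (P_sum hr hs hij hj) (by module)
    · exact mem_or_left (P_diff_mem hr hs i j (by omega) (by omega) (by omega)) (by module)
    · exact mem_or_right (P_diff_mem hr hs i j (by omega) (by omega) (by omega)) (by module)
    · exact mem_or_right (P_sum hr hs hij hj) (by module)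
  · rcases pm_cases ha with rfl | rfl <;> rcases pm_cases hb with rfl | rfl
    · exact mem_or_left (P_nu_sum hr hs hij hj) (by module)
    · exact mem_or_left (P_diff_mem hr hs (r+i) (r+j) (by omega) (by omega) (by omega))
        (by module)
    · exact mem_or_right (P_diff_mem hr hs (r+i) (r+j) (by omega) (by omega) (by omega))
        (by module)
    · exact mem_or_right (P_nu_sum hr hs hij hj) (by module)
  · rcases pm_cases ha with rfl | rfl <;> rcases hx with rfl | rfl
    · exact mem_or_left (P_nu_mem hr hs hj) (by module)
    · exact mem_or_left (add_mem (P_nu_mem hr hs hj) (P_nu_mem hr hs hj)) (by module)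
    · exact mem_or_right (P_nu_mem hr hs hj) (by module)
    · exact mem_or_right (add_mem (P_nu_mem hr hs hj) (P_nu_mem hr hs hj)) (by module)

end St17aux

open St17aux

/-- `Σ` is a base of `Δ = Δ_reg ∪ Δ_sing`, and `Π` is a base of `Δ_reg` inducing the same
positive system on `Δ_reg` as `Σ`. -/
theorem statement17 (r s : ℕ) (hr : 2 ≤ r) (hs : 1 ≤ s) :
    IsBase (Dreg r s ∪ Dsing r s) (S17 r s) ∧
    IsBase (Dreg r s) (P17 r s) ∧
    Dreg r s ∩ NComb (P17 r s) = Dreg r s ∩ NComb (S17 r s) := by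
  refine ⟨⟨?_, linIndep_S17 hr hs, cover_S hr hs⟩, ⟨?_, linIndep_P17 hr hs, cover_P hr hs⟩, ?_⟩
  · -- S17 ⊆ Dreg ∪ Dsing
    rintro x (((⟨j, hj, rfl⟩ | rfl) | ⟨i, hi, rfl⟩) | rfl)
    · exact Or.inl (Or.inl (Or.inr ⟨1, pm_one, -1, pm_neg_one, j, j+1, by omega, hj,
        by rw [bv_congr (show r+(j+1) = r+j+1 by omega)]; module⟩))
    · exact Or.inr (Or.inr ⟨-1, pm_neg_one, 1, pm_one, 0, s-1, by omega, by omega,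
        by rw [bv_congr (show r+(s-1) = r+s-1 by omega)]; module⟩)
    · exact Or.inl (Or.inl (Or.inl ⟨1, pm_one, -1, pm_neg_one, i, i+1, by omega, hi,
        by module⟩))
    · exact Or.inr (Or.inl ⟨1, pm_one, r-1, by omega, by module⟩)
  · -- P17 ⊆ Dreg
    rintro x (((⟨i, hi, rfl⟩ | rfl) | ⟨j, hj, rfl⟩) | rfl)
    · exact Or.inl (Or.inl ⟨1, pm_one, -1, pm_neg_one, i, i+1, by omega, hi, by module⟩)
    · exact Or.inl (Or.inl ⟨1, pm_one, 1, pm_one, r-2, r-1, by omega, by omega, by module⟩)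
    · exact Or.inl (Or.inr ⟨1, pm_one, -1, pm_neg_one, j, j+1, by omega, hj,
        by rw [bv_congr (show r+(j+1) = r+j+1 by omega)]; module⟩)
    · exact Or.inr ⟨1, pm_one, s-1, by omega,
        Or.inl (by rw [bv_congr (show r+(s-1) = r+s-1 by omega)]; module)⟩
  · -- equality of positive systems
    ext x
    simp only [Set.mem_inter_iff]
    constructor
    · rintro ⟨hx, hP⟩
      refine ⟨hx, ?_⟩
      rcases cover_S hr hs (Or.inl hx) with h | h
      · exact h
      · exfalso
        have h1 : 0 ≤ FF r s x :=
          FF_nonneg (fun y hy => le_of_lt (FF_P_pos hr hs y hy)) hP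
        have h2 : 0 ≤ FF r s (-x) :=
          FF_nonneg (fun y hy => le_of_lt (FF_S_pos hr hs y hy)) (Set.mem_neg.mp h)
        rw [FF_neg] at h2
        exact FF_Dreg_ne hr hs x hx (le_antisymm (by linarith) h1)
    · rintro ⟨hx, hS⟩
      refine ⟨hx, ?_⟩
      rcases cover_P hr hs hx with h | h
      · exact h
      · exfalso
        have h1 : 0 ≤ FF r s x :=
          FF_nonneg (fun y hy => le_of_lt (FF_S_pos hr hs y hy)) hS
        have h2 : 0 ≤ FF r s (-x) :=
          FF_nonneg (fun y hy => le_of_lt (FF_P_pos hr hs y hy)) (Set.mem_neg.mp h)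
        rw [FF_neg] at h2
        exact FF_Dreg_ne hr hs x hx (le_antisymm (by linarith) h1)
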